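/- Convergence of the tail sum ∑_{k=N}^∞ (A_k^{α+1})^{−1}: for α > −1 and A_k^{α+1} = binom(k+α+1,k), the series ∑_{k=N}^∞ 1/A_k^{α+1} converges and is bounded above by C(N+1)^{−α} for a constant C depending only on α, provided α > 0. -/

import Mathlib

open Real

/-- The generalized binomial coefficient `A_k^{α+1} = Γ(k+α+2)/(Γ(k+1)Γ(α+2))`. -/
noncomputable def binomA (α : ℝ) (k : ℕ) : ℝ :=
  Real.Gamma ((k : ℝ) + α + 2) / (Real.Gamma ((k : ℝ) + 1) * Real.Gamma (α + 2))

noncomputable def tailAux (α : ℝ) (k : ℕ) : ℝ :=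
  ((α + 1) / α) * Real.Gamma (α + 1) * (Real.Gamma ((k : ℝ) + 1) / Real.Gamma ((k : ℝ) + α + 1))

lemma tailAux_pos (α : ℝ) (hα : 0 < α) (k : ℕ) : 0 < tailAux α k := by
  have h1 : (0:ℝ) < (k : ℝ) + 1 := by positivity
  have h2 : (0:ℝ) < (k : ℝ) + α + 1 := by positivity
  have h3 : (0:ℝ) < α + 1 := by positivity
  exact mul_pos (mul_pos (by positivity) (Gamma_pos_of_pos h3))
    (div_pos (Gamma_pos_of_pos h1) (Gamma_pos_of_pos h2))

lemma binomA_pos (α : ℝ) (hα : 0 < α) (k : ℕ) : 0 < binomA α k := by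
  unfold binomA
  exact div_pos (Gamma_pos_of_pos (by positivity))
    (mul_pos (Gamma_pos_of_pos (by positivity)) (Gamma_pos_of_pos (by positivity)))

lemma binomA_inv_eq (α : ℝ) (hα : 0 < α) (k : ℕ) :
    (binomA α k)⁻¹ = tailAux α k - tailAux α (k + 1) := by
  have hk1 : ((k:ℝ) + 1) ≠ 0 := by positivity
  have hka : ((k:ℝ) + α + 1) ≠ 0 := by positivity
  have hα1 : (α + 1 : ℝ) ≠ 0 := by positivity
  have hg1 : Real.Gamma ((k:ℝ) + 1) ≠ 0 := (Gamma_pos_of_pos (by positivity)).ne'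
  have hg2 : Real.Gamma ((k:ℝ) + α + 1) ≠ 0 := (Gamma_pos_of_pos (by positivity)).ne'
  have hg3 : Real.Gamma (α + 1) ≠ 0 := (Gamma_pos_of_pos (by positivity)).ne'
  have h1 : Real.Gamma ((k:ℝ) + α + 2) = ((k:ℝ) + α + 1) * Real.Gamma ((k:ℝ) + α + 1) := by
    rw [show (k:ℝ) + α + 2 = ((k:ℝ) + α + 1) + 1 by ring, Real.Gamma_add_one hka]
  have h3 : Real.Gamma (α + 2) = (α + 1) * Real.Gamma (α + 1) := by
    rw [show α + 2 = (α + 1) + 1 by ring, Real.Gamma_add_one hα1]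
  unfold binomA tailAux
  push_cast
  rw [show (k:ℝ) + 1 + 1 = ((k:ℝ) + 1) + 1 by ring, Real.Gamma_add_one hk1,
    show (k:ℝ) + 1 + α + 1 = ((k:ℝ) + α + 1) + 1 by ring, Real.Gamma_add_one hka,
    h1, h3]
  generalize Real.Gamma ((k:ℝ) + 1) = G1 at *
  generalize Real.Gamma ((k:ℝ) + α + 1) = G2 at *
  generalize Real.Gamma (α + 1) = G3 at *
  have hα' : α ≠ 0 := hα.ne'
  field_simp
  ring

lemma binomA_sum_range (α : ℝ) (hα : 0 < α) (N n : ℕ) :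
    ∑ k ∈ Finset.range n, (binomA α (k + N))⁻¹ = tailAux α N - tailAux α (N + n) := by
  have : ∀ k ∈ Finset.range n, (binomA α (k + N))⁻¹ = tailAux α (N + k) - tailAux α (N + k + 1) := by
    intro k _
    rw [show N + k = k + N from Nat.add_comm N k] at *
    exact binomA_inv_eq α hα (k + N)
  rw [Finset.sum_congr rfl this]
  have := Finset.sum_range_sub' (fun i => tailAux α (N + i)) n
  simp only [← Nat.add_assoc] at this
  rw [this, Nat.add_zero]

lemma frac_step (β : ℝ) (hβ0 : 0 < β) (hβ1 : β < 1) (N : ℕ) :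
    Real.Gamma ((N:ℝ) + 1) * ((N:ℝ) + β) ^ β ≤ Real.Gamma ((N:ℝ) + β + 1) := by
  have ha : ((N:ℝ) + β) ∈ Set.Ioi (0:ℝ) := by simpa using by positivity
  have hb : ((N:ℝ) + β + 1) ∈ Set.Ioi (0:ℝ) := by simpa using by positivity
  have hw1 : (0:ℝ) ≤ β := hβ0.le
  have hw2 : (0:ℝ) ≤ 1 - β := by linarith
  have hsum : β + (1 - β) = 1 := by ring
  have hconv := Real.convexOn_log_Gamma.2 ha hb hw1 hw2 hsum
  have hcomb : β • ((N:ℝ) + β) + (1 - β) • ((N:ℝ) + β + 1) = (N:ℝ) + 1 := by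
    simp [smul_eq_mul]; ring
  rw [hcomb] at hconv
  simp only [Function.comp_apply, smul_eq_mul] at hconv
  have hGab : Real.Gamma ((N:ℝ) + β + 1) = ((N:ℝ) + β) * Real.Gamma ((N:ℝ) + β) := by
    rw [Real.Gamma_add_one (by positivity)]
  have hGa_pos : 0 < Real.Gamma ((N:ℝ) + β) := Gamma_pos_of_pos (by positivity)
  have hGb_pos : 0 < Real.Gamma ((N:ℝ) + β + 1) := Gamma_pos_of_pos (by positivity)
  have hG1_pos : 0 < Real.Gamma ((N:ℝ) + 1) := Gamma_pos_of_pos (by positivity)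
  have hxpos : (0:ℝ) < (N:ℝ) + β := by positivity
  have hlog : Real.log (Real.Gamma ((N:ℝ) + β)) =
      Real.log (Real.Gamma ((N:ℝ) + β + 1)) - Real.log ((N:ℝ) + β) := by
    rw [hGab, Real.log_mul hxpos.ne' hGa_pos.ne']; ring
  rw [hlog] at hconv
  have key : Real.log (Real.Gamma ((N:ℝ) + 1) * ((N:ℝ) + β) ^ β) ≤
      Real.log (Real.Gamma ((N:ℝ) + β + 1)) := by
    rw [Real.log_mul hG1_pos.ne' (by positivity), Real.log_rpow hxpos]
    nlinarith [hconv]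
  have := Real.exp_le_exp.2 key
  rwa [Real.exp_log (by positivity), Real.exp_log hGb_pos] at this

lemma int_step (β : ℝ) (hβ : 0 ≤ β) (N : ℕ) : ∀ m : ℕ,
    Real.Gamma ((N:ℝ) + β + 1) * ((N:ℝ) + 1) ^ m ≤ Real.Gamma ((N:ℝ) + β + 1 + m) := by
  intro m
  induction m with
  | zero => simp
  | succ m ih =>
    have h1 : Real.Gamma ((N:ℝ) + β + 1 + (m + 1 : ℕ)) =
        ((N:ℝ) + β + 1 + m) * Real.Gamma ((N:ℝ) + β + 1 + m) := by
      push_cast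
      rw [show (N:ℝ) + β + 1 + (m + 1) = ((N:ℝ) + β + 1 + m) + 1 by ring,
        Real.Gamma_add_one (by positivity)]
    have hpos : (0:ℝ) < Real.Gamma ((N:ℝ) + β + 1 + m) := Gamma_pos_of_pos (by positivity)
    have h2 : ((N:ℝ) + 1) ≤ (N:ℝ) + β + 1 + m := by
      have : (0:ℝ) ≤ (m:ℕ) := Nat.cast_nonneg m
      linarith
    calc Real.Gamma ((N:ℝ) + β + 1) * ((N:ℝ) + 1) ^ (m + 1)
        = (Real.Gamma ((N:ℝ) + β + 1) * ((N:ℝ) + 1) ^ m) * ((N:ℝ) + 1) := by ring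
      _ ≤ Real.Gamma ((N:ℝ) + β + 1 + m) * ((N:ℝ) + β + 1 + m) := by
          apply mul_le_mul ih h2 (by positivity) hpos.le
      _ = Real.Gamma ((N:ℝ) + β + 1 + (m + 1 : ℕ)) := by rw [h1]; ring

lemma gamma_lb (α : ℝ) (hα : 0 < α) : ∃ c : ℝ, 0 < c ∧ ∀ N : ℕ,
    c * ((N:ℝ) + 1) ^ α * Real.Gamma ((N:ℝ) + 1) ≤ Real.Gamma ((N:ℝ) + α + 1) := by
  set m : ℕ := ⌊α⌋₊ with hm
  set β : ℝ := α - m with hβ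
  have hβ0 : 0 ≤ β := by
    have := Nat.floor_le hα.le
    simp only [hβ]; linarith
  have hβ1 : β < 1 := by
    have := Nat.lt_floor_add_one α
    simp only [hβ]; linarith
  have hαm : α = β + m := by simp [hβ]
  by_cases hb : β = 0
  · refine ⟨1, one_pos, fun N => ?_⟩
    have h := int_step 0 le_rfl N m
    rw [show (N:ℝ) + 0 + 1 = (N:ℝ) + 1 by ring] at h
    have hra : ((N:ℝ) + 1) ^ α = ((N:ℝ) + 1) ^ (m:ℕ) := by
      rw [hαm, hb, zero_add, ← Real.rpow_natCast]
    rw [hra, show (N:ℝ) + α + 1 = (N:ℝ) + 1 + m by rw [hαm, hb]; push_cast; ring]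
    linarith [h]
  · have hβpos : 0 < β := lt_of_le_of_ne hβ0 (Ne.symm hb)
    refine ⟨β, hβpos, fun N => ?_⟩
    have hN1 : (0:ℝ) < (N:ℝ) + 1 := by positivity
    have hsplit : ((N:ℝ) + 1) ^ α = ((N:ℝ) + 1) ^ β * ((N:ℝ) + 1) ^ (m:ℕ) := by
      rw [← Real.rpow_natCast _ m, ← Real.rpow_add hN1, ← hαm]
    have h1 : β * ((N:ℝ) + 1) ^ β ≤ ((N:ℝ) + β) ^ β := by
      calc β * ((N:ℝ) + 1) ^ β ≤ β ^ β * ((N:ℝ) + 1) ^ β := by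
            apply mul_le_mul_of_nonneg_right _ (by positivity)
            calc β = β ^ (1:ℝ) := (Real.rpow_one β).symm
              _ ≤ β ^ β := Real.rpow_le_rpow_of_exponent_ge hβpos hβ1.le hβ1.le
        _ = (β * ((N:ℝ) + 1)) ^ β := (Real.mul_rpow hβpos.le hN1.le).symm
        _ ≤ ((N:ℝ) + β) ^ β := by
            apply Real.rpow_le_rpow (by positivity) _ hβ0
            nlinarith [Nat.cast_nonneg (α := ℝ) N]
    have h2 := frac_step β hβpos hβ1 N
    have h3 := int_step β hβ0 N m
    have hG1 : (0:ℝ) < Real.Gamma ((N:ℝ) + 1) := Gamma_pos_of_pos hN1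
    have hfin : (N:ℝ) + α + 1 = (N:ℝ) + β + 1 + m := by rw [hαm]; ring
    rw [hfin, hsplit]
    calc β * (((N:ℝ) + 1) ^ β * ((N:ℝ) + 1) ^ (m:ℕ)) * Real.Gamma ((N:ℝ) + 1)
        = (β * ((N:ℝ) + 1) ^ β) * Real.Gamma ((N:ℝ) + 1) * ((N:ℝ) + 1) ^ (m:ℕ) := by ring
      _ ≤ ((N:ℝ) + β) ^ β * Real.Gamma ((N:ℝ) + 1) * ((N:ℝ) + 1) ^ (m:ℕ) := by
          apply mul_le_mul_of_nonneg_right (mul_le_mul_of_nonneg_right h1 hG1.le) (by positivity)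
      _ ≤ Real.Gamma ((N:ℝ) + β + 1) * ((N:ℝ) + 1) ^ (m:ℕ) := by
          apply mul_le_mul_of_nonneg_right _ (by positivity)
          calc ((N:ℝ) + β) ^ β * Real.Gamma ((N:ℝ) + 1)
              = Real.Gamma ((N:ℝ) + 1) * ((N:ℝ) + β) ^ β := by ring
            _ ≤ _ := h2
      _ ≤ Real.Gamma ((N:ℝ) + β + 1 + m) := h3

theorem tail_sum_binomA (α : ℝ) (hα : 0 < α) :
    ∃ C : ℝ, 0 < C ∧ ∀ N : ℕ,
      (Summable fun k : ℕ => (binomA α (k + N))⁻¹) ∧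
        ∑' k : ℕ, (binomA α (k + N))⁻¹ ≤ C * ((N : ℝ) + 1) ^ (-α) := by
  obtain ⟨c, hc, hgb⟩ := gamma_lb α hα
  have hGα : (0:ℝ) < Real.Gamma (α + 1) := Gamma_pos_of_pos (by positivity)
  refine ⟨((α + 1) / α) * Real.Gamma (α + 1) * c⁻¹, by positivity, fun N => ?_⟩
  have hnonneg : ∀ k : ℕ, 0 ≤ (binomA α (k + N))⁻¹ :=
    fun k => (inv_pos.mpr (binomA_pos α hα (k + N))).le
  have hbound : ∀ n : ℕ, ∑ k ∈ Finset.range n, (binomA α (k + N))⁻¹ ≤ tailAux α N := by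
    intro n
    rw [binomA_sum_range α hα N n]
    have := tailAux_pos α hα (N + n)
    linarith
  have hsummable : Summable fun k : ℕ => (binomA α (k + N))⁻¹ :=
    summable_of_sum_range_le hnonneg hbound
  refine ⟨hsummable, ?_⟩
  have htsum : ∑' k : ℕ, (binomA α (k + N))⁻¹ ≤ tailAux α N :=
    tsum_le_of_sum_range_le hnonneg hbound
  have hN1 : (0:ℝ) < (N:ℝ) + 1 := by positivity
  have hGa : (0:ℝ) < Real.Gamma ((N:ℝ) + α + 1) := Gamma_pos_of_pos (by positivity)
  have hG1 : (0:ℝ) < Real.Gamma ((N:ℝ) + 1) := Gamma_pos_of_pos hN1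
  have hcancel : ((N:ℝ) + 1) ^ (-α) * ((N:ℝ) + 1) ^ α = 1 := by
    rw [← Real.rpow_add hN1]; simp
  have hrneg : (0:ℝ) < ((N:ℝ) + 1) ^ (-α) := by positivity
  have step : Real.Gamma ((N:ℝ) + 1) / Real.Gamma ((N:ℝ) + α + 1) ≤ c⁻¹ * ((N:ℝ) + 1) ^ (-α) := by
    rw [div_le_iff₀ hGa]
    have h4 := mul_le_mul_of_nonneg_left (hgb N)
      (le_of_lt (show (0:ℝ) < c⁻¹ * ((N:ℝ) + 1) ^ (-α) by positivity))
    have h5 : c⁻¹ * ((N:ℝ) + 1) ^ (-α) * (c * ((N:ℝ) + 1) ^ α * Real.Gamma ((N:ℝ) + 1)) =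
        Real.Gamma ((N:ℝ) + 1) := by
      rw [show c⁻¹ * ((N:ℝ) + 1) ^ (-α) * (c * ((N:ℝ) + 1) ^ α * Real.Gamma ((N:ℝ) + 1)) =
        (c⁻¹ * c) * (((N:ℝ) + 1) ^ (-α) * ((N:ℝ) + 1) ^ α) * Real.Gamma ((N:ℝ) + 1) by ring,
        hcancel, inv_mul_cancel₀ hc.ne', one_mul, one_mul]
    linarith [h4, h5.symm.le]
  calc ∑' k : ℕ, (binomA α (k + N))⁻¹ ≤ tailAux α N := htsum
    _ = ((α + 1) / α) * Real.Gamma (α + 1) *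
        (Real.Gamma ((N:ℝ) + 1) / Real.Gamma ((N:ℝ) + α + 1)) := rfl
    _ ≤ ((α + 1) / α) * Real.Gamma (α + 1) * (c⁻¹ * ((N:ℝ) + 1) ^ (-α)) := by
        apply mul_le_mul_of_nonneg_left step (by positivity)
    _ = ((α + 1) / α) * Real.Gamma (α + 1) * c⁻¹ * ((N:ℝ) + 1) ^ (-α) := by ring
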